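/- (Theorem 6.) Suppose the code defined by α is sparse. Then: (a) for all i, j ∈ ZMod d and every n ∈ ZMod d with n ≠ 0, ⟨ī| S~^(0,n) |j̄⟩ = 0; and (b) for all i, j ∈ ZMod d, every Γ, Υ ∈ {S~, A~}, and all p ≠ q and r ≠ s in ZMod d with {p,q} ≠ {r,s} as sets, ⟨ī| Γ^(p,q) Υ^(r,s) |j̄⟩ = 0. -/

import Mathlib

open Matrix Complex Finset

/-- ζ = exp(2πi/d). -/
noncomputable def zeta (d : ℕ) : ℂ := Complex.exp (2 * Real.pi * Complex.I / d)

/-- The shift matrix X = Σ_p |p+1⟩⟨p|. -/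
noncomputable def shiftX (d : ℕ) [NeZero d] : Matrix (ZMod d) (ZMod d) ℂ :=
  ∑ p : ZMod d, Matrix.single (p + 1) p 1

/-- The clock matrix Z = Σ_p ζ^p |p⟩⟨p|. -/
noncomputable def clockZ (d : ℕ) [NeZero d] : Matrix (ZMod d) (ZMod d) ℂ :=
  ∑ p : ZMod d, Matrix.single p p (zeta d ^ p.val)

/-- S^(j,k) = |j⟩⟨k| + |k⟩⟨j|. -/
noncomputable def Smat (d : ℕ) (j k : ZMod d) : Matrix (ZMod d) (ZMod d) ℂ :=
  Matrix.single j k 1 + Matrix.single k j 1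

/-- A^(j,k) = −i|j⟩⟨k| + i|k⟩⟨j|. -/
noncomputable def Amat (d : ℕ) (j k : ZMod d) : Matrix (ZMod d) (ZMod d) ℂ :=
  (-Complex.I) • Matrix.single j k 1 + Complex.I • Matrix.single k j 1

/-- D^(ℓ) = |ℓ⟩⟨ℓ| − |ℓ+1⟩⟨ℓ+1|. -/
noncomputable def Dmat (d : ℕ) (ℓ : ZMod d) : Matrix (ZMod d) (ZMod d) ℂ :=
  Matrix.single ℓ ℓ 1 - Matrix.single (ℓ + 1) (ℓ + 1) 1

/-- M acting at site i of an N-qudit system. -/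
noncomputable def site (d N : ℕ) [NeZero d] (M : Matrix (ZMod d) (ZMod d) ℂ) (i : Fin N) :
    Matrix (Fin N → ZMod d) (Fin N → ZMod d) ℂ :=
  Matrix.of fun f g =>
    M (f i) (g i) * ∏ j ∈ Finset.univ.erase i, (if f j = g j then (1 : ℂ) else 0)

/-- The collective operator M~ = Σ_i M_[i]. -/
noncomputable def coll (d N : ℕ) [NeZero d] (M : Matrix (ZMod d) (ZMod d) ℂ) :
    Matrix (Fin N → ZMod d) (Fin N → ZMod d) ℂ :=
  ∑ i : Fin N, site d N M i

/-- The N-fold tensor power of a d×d matrix. -/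
noncomputable def tpow (d N : ℕ) [NeZero d] (M : Matrix (ZMod d) (ZMod d) ℂ) :
    Matrix (Fin N → ZMod d) (Fin N → ZMod d) ℂ :=
  Matrix.of fun f g => ∏ i : Fin N, M (f i) (g i)

/-- Inner product of N-qudit vectors, conjugate-linear in the first argument. -/
noncomputable def qinner (d N : ℕ) [NeZero d] (v w : (Fin N → ZMod d) → ℂ) : ℂ :=
  ∑ f : Fin N → ZMod d, star (v f) * w f

/-- A content u is admissible if all entries are nonnegative and they sum to N. -/
def admissible (d N : ℕ) [NeZero d] (u : ZMod d → ℤ) : Prop :=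
  (∀ k, 0 ≤ u k) ∧ ∑ k : ZMod d, u k = (N : ℤ)

/-- The Dicke vector |S_u⟩: sum of standard basis vectors over all f with |f⁻¹{k}| = u_k. -/
noncomputable def dicke (d N : ℕ) [NeZero d] (u : ZMod d → ℤ) : (Fin N → ZMod d) → ℂ :=
  fun f =>
    if ∀ k : ZMod d, ((Finset.univ.filter fun i => f i = k).card : ℤ) = u k then 1 else 0

/-- The weight Σ_{m=0}^{d−1} m·u_m of a content. -/
def cweight (d : ℕ) (u : ZMod d → ℤ) : ℤ :=
  ∑ m ∈ Finset.range d, (m : ℤ) * u ((m : ℕ) : ZMod d)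

/-- The code word |0̄⟩ determined by coefficients α. -/
noncomputable def codeZero (d N : ℕ) [NeZero d] (α : (ZMod d → ℤ) →₀ ℂ) :
    (Fin N → ZMod d) → ℂ :=
  α.sum fun u c => c • dicke d N u

/-- The code word |k̄⟩ = X̄^k |0̄⟩. -/
noncomputable def codeword (d N : ℕ) [NeZero d] (α : (ZMod d → ℤ) →₀ ℂ) (k : ZMod d) :
    (Fin N → ZMod d) → ℂ :=
  (tpow d N (shiftX d)) ^ k.val *ᵥ codeZero d N α

/-- Sparseness of the code determined by α. -/
def sparse (d : ℕ) [NeZero d] (α : (ZMod d → ℤ) →₀ ℂ) : Prop :=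
  ∀ u ∈ α.support, ∀ u' ∈ α.support, ∀ δ : ZMod d,
    (u, δ) ≠ (u', (0 : ZMod d)) → 4 < ∑ ξ : ZMod d, |u ξ - u' (ξ + δ)|


set_option linter.unusedSectionVars false

namespace Stmt16Aux

variable (d N : ℕ) [NeZero d]

def cont (f : Fin N → ZMod d) : ZMod d → ℤ :=
  fun k => ((Finset.univ.filter fun i => f i = k).card : ℤ)

lemma cont_eq_sum (f : Fin N → ZMod d) (k : ZMod d) :
    cont d N f k = ∑ i : Fin N, (if f i = k then (1:ℤ) else 0) := by
  unfold cont; rw [Finset.card_filter]; push_cast; rfl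

lemma shiftX_apply (a b : ZMod d) : shiftX d a b = if a = b + 1 then 1 else 0 := by
  unfold shiftX
  rw [Matrix.sum_apply]
  split_ifs with h
  · subst h
    rw [Finset.sum_eq_single b]
    · simp [Matrix.single]
    · intro p _ hp
      simp only [Matrix.single, Matrix.of_apply, ite_eq_right_iff, and_imp]
      intro _ h2; exact absurd h2 hp
    · simp
  · apply Finset.sum_eq_zero
    intro p _
    simp only [Matrix.single, Matrix.of_apply, ite_eq_right_iff, and_imp]
    intro h1 h2; subst h2; exact absurd h1.symm h

lemma tpow_mulVec_shift (v : (Fin N → ZMod d) → ℂ) (f : Fin N → ZMod d) :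
    (tpow d N (shiftX d) *ᵥ v) f = v (fun i => f i - 1) := by
  simp only [Matrix.mulVec, dotProduct, tpow, Matrix.of_apply, shiftX_apply]
  have h1 : ∀ g : Fin N → ZMod d,
      (∏ i : Fin N, if f i = g i + 1 then (1:ℂ) else 0)
        = if (fun i => f i - 1) = g then 1 else 0 := by
    intro g
    rw [Finset.prod_boole]
    congr 1
    rw [eq_iff_iff]
    constructor
    · intro h; funext i; rw [sub_eq_iff_eq_add]; exact h i (Finset.mem_univ i)
    · intro h i _; rw [← congrFun h i, sub_add_cancel]
  rw [Finset.sum_congr rfl (fun g _ => by rw [h1 g])]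
  simp [ite_mul, Finset.sum_ite_eq]

lemma tpow_pow_mulVec (n : ℕ) (v : (Fin N → ZMod d) → ℂ) (f : Fin N → ZMod d) :
    ((tpow d N (shiftX d)) ^ n *ᵥ v) f = v (fun i => f i - (n : ZMod d)) := by
  induction n generalizing f with
  | zero => simp
  | succ m ih =>
    rw [pow_succ', ← Matrix.mulVec_mulVec, tpow_mulVec_shift, ih]
    congr 1; funext i; push_cast; ring

lemma dicke_apply (u : ZMod d → ℤ) (f : Fin N → ZMod d) :
    dicke d N u f = if cont d N f = u then 1 else 0 := by
  have h : (∀ k : ZMod d, ((Finset.univ.filter fun i => f i = k).card : ℤ) = u k)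
      ↔ cont d N f = u := funext_iff.symm
  simp only [dicke]
  split_ifs <;> tauto

lemma codeZero_apply (α : (ZMod d → ℤ) →₀ ℂ) (f : Fin N → ZMod d) :
    codeZero d N α f = α (cont d N f) := by
  unfold codeZero
  rw [Finsupp.sum, Finset.sum_apply]
  simp only [Pi.smul_apply, dicke_apply, smul_eq_mul]
  have h : ∀ u ∈ α.support, α u * (if cont d N f = u then (1:ℂ) else 0)
      = if u = cont d N f then α u else 0 := by
    intro u _
    by_cases hc : cont d N f = u
    · simp [hc]
    · rw [if_neg hc, if_neg (fun hh => hc hh.symm)]; ring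
  rw [Finset.sum_congr rfl h, Finset.sum_ite_eq' α.support (cont d N f) (fun u => α u)]
  by_cases hm : cont d N f ∈ α.support
  · simp [hm]
  · simp [hm, Finsupp.notMem_support_iff.mp hm]

lemma cont_shift (f : Fin N → ZMod d) (c ξ : ZMod d) :
    cont d N (fun i => f i - c) ξ = cont d N f (ξ + c) := by
  unfold cont
  simp only [sub_eq_iff_eq_add]

lemma codeword_apply (α : (ZMod d → ℤ) →₀ ℂ) (k : ZMod d) (f : Fin N → ZMod d) :
    codeword d N α k f = α (fun ξ => cont d N f (ξ + k)) := by
  unfold codeword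
  rw [tpow_pow_mulVec, codeZero_apply]
  congr 1
  funext ξ
  rw [cont_shift]
  simp [ZMod.natCast_val, ZMod.cast_id]

lemma coll_support {M : Matrix (ZMod d) (ZMod d) ℂ} {f g : Fin N → ZMod d}
    (h : coll d N M f g ≠ 0) :
    ∃ i : Fin N, M (f i) (g i) ≠ 0 ∧ ∀ j, j ≠ i → f j = g j := by
  unfold coll at h
  rw [Matrix.sum_apply] at h
  obtain ⟨i, -, hi⟩ := Finset.exists_ne_zero_of_sum_ne_zero h
  refine ⟨i, ?_, ?_⟩
  · intro h0; apply hi; simp [site, h0]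
  · intro j hj
    by_contra hfg
    apply hi
    simp only [site, Matrix.of_apply]
    apply mul_eq_zero_of_right
    apply Finset.prod_eq_zero (Finset.mem_erase.mpr ⟨hj, Finset.mem_univ j⟩)
    simp [hfg]

lemma cont_diff {f g : Fin N → ZMod d} {i : Fin N}
    (h : ∀ j, j ≠ i → f j = g j) (ξ : ZMod d) :
    cont d N f ξ - cont d N g ξ
      = (if f i = ξ then 1 else 0) - (if g i = ξ then 1 else 0) := by
  rw [cont_eq_sum, cont_eq_sum, ← Finset.sum_sub_distrib]
  rw [Finset.sum_eq_single i]
  · intro j _ hj; rw [h j hj]; ring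
  · intro h'; exact absurd (Finset.mem_univ i) h'

lemma pair_apply_ne {p q a b : ZMod d} {Γ : Matrix (ZMod d) (ZMod d) ℂ}
    (hΓ : Γ = Smat d p q ∨ Γ = Amat d p q) (h : Γ a b ≠ 0) :
    (a = p ∧ b = q) ∨ (a = q ∧ b = p) := by
  by_contra hc
  push_neg at hc
  apply h
  rcases hΓ with rfl | rfl <;>
    simp only [Smat, Amat, Matrix.add_apply, Matrix.smul_apply, Matrix.single,
      Matrix.of_apply, smul_eq_mul] <;>
    split_ifs with h1 h2 h2 <;>
    simp_all [eq_comm]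

lemma coll_pair {p q : ZMod d} {Γ : Matrix (ZMod d) (ZMod d) ℂ}
    (hΓ : Γ = Smat d p q ∨ Γ = Amat d p q)
    {f g : Fin N → ZMod d} (h : coll d N Γ f g ≠ 0) :
    (∀ ξ, cont d N f ξ - cont d N g ξ
        = (if p = ξ then 1 else 0) - (if q = ξ then 1 else 0)) ∨
    (∀ ξ, cont d N f ξ - cont d N g ξ
        = (if q = ξ then 1 else 0) - (if p = ξ then 1 else 0)) := by
  obtain ⟨i, hM, hoff⟩ := coll_support d N h
  rcases pair_apply_ne d hΓ hM with ⟨h1, h2⟩ | ⟨h1, h2⟩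
  · left; intro ξ; rw [cont_diff d N hoff ξ, h1, h2]
  · right; intro ξ; rw [cont_diff d N hoff ξ, h1, h2]

lemma abs_ite_sub_le (a b ξ : ZMod d) :
    |(if a = ξ then (1:ℤ) else 0) - (if b = ξ then 1 else 0)|
      ≤ (if a = ξ then 1 else 0) + (if b = ξ then 1 else 0) := by
  split_ifs <;> simp

lemma sum_ite_one (a : ZMod d) :
    ∑ ξ : ZMod d, (if a = ξ then (1:ℤ) else 0) = 1 := by
  simp [Finset.sum_ite_eq]

lemma ite_pair_inj {a b c e : ZMod d} (hab : a ≠ b)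
    (h : ∀ ξ : ZMod d, ((if a = ξ then (1:ℤ) else 0) - (if b = ξ then 1 else 0))
        = ((if c = ξ then 1 else 0) - (if e = ξ then 1 else 0))) :
    a = c ∧ b = e := by
  have hba : ¬ (b = a) := fun hh => hab hh.symm
  constructor
  · have h1 := h a
    by_contra hac
    have hca : ¬ (c = a) := fun hh => hac hh.symm
    rw [if_pos rfl, if_neg hba, if_neg hca] at h1
    split_ifs at h1 <;> omega
  · have h2 := h b
    by_contra hbe
    have heb : ¬ (e = b) := fun hh => hbe hh.symm
    rw [if_neg hab, if_pos rfl, if_neg heb] at h2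
    split_ifs at h2 <;> omega

lemma key {α : (ZMod d → ℤ) →₀ ℂ} (hsp : sparse d α) {i j : ZMod d}
    {f g : Fin N → ZMod d}
    (hf : α (fun ξ => cont d N f (ξ + i)) ≠ 0)
    (hg : α (fun ξ => cont d N g (ξ + j)) ≠ 0)
    (hle : ∑ ξ : ZMod d, |cont d N f ξ - cont d N g ξ| ≤ 4) :
    cont d N f = cont d N g := by
  set u : ZMod d → ℤ := fun ξ => cont d N f (ξ + i) with hu
  set u' : ZMod d → ℤ := fun ξ => cont d N g (ξ + j) with hu'
  have hum : u ∈ α.support := Finsupp.mem_support_iff.mpr hf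
  have hum' : u' ∈ α.support := Finsupp.mem_support_iff.mpr hg
  by_cases hc : (u, i - j) = (u', (0 : ZMod d))
  · rw [Prod.mk.injEq] at hc
    obtain ⟨h1, h2⟩ := hc
    have hij : i = j := by rwa [sub_eq_zero] at h2
    funext ζ
    have h3 := congrFun h1 (ζ - i)
    simp only [hu, hu'] at h3
    rw [sub_add_cancel] at h3
    rw [← hij, sub_add_cancel] at h3
    exact h3
  · exfalso
    have h4 := hsp u hum u' hum' (i - j) hc
    have heq : ∑ ξ : ZMod d, |u ξ - u' (ξ + (i - j))|
        = ∑ ξ : ZMod d, |cont d N f ξ - cont d N g ξ| := by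
      apply Fintype.sum_equiv (Equiv.addRight i)
      intro ξ
      have h5 : ξ + (i - j) + j = ξ + i := by ring
      simp only [hu, hu', h5, Equiv.coe_addRight]
    linarith

end Stmt16Aux


open Stmt16Aux

/-- Theorem 6. -/
theorem stmt16 (d N : ℕ) [NeZero d] (hd : 2 ≤ d) (hN : 1 ≤ N)
    (α : (ZMod d → ℤ) →₀ ℂ)
    (hadm : ∀ u : ZMod d → ℤ, ¬ admissible d N u → α u = 0)
    (hsp : sparse d α) :
    (∀ i j : ZMod d, ∀ n : ZMod d, n ≠ 0 →
      qinner d N (codeword d N α i) (coll d N (Smat d 0 n) *ᵥ codeword d N α j) = 0) ∧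
    (∀ i j : ZMod d, ∀ p q r s : ZMod d, p ≠ q → r ≠ s →
      ({p, q} : Set (ZMod d)) ≠ ({r, s} : Set (ZMod d)) →
      ∀ Γ Υ : Matrix (ZMod d) (ZMod d) ℂ,
        (Γ = Smat d p q ∨ Γ = Amat d p q) →
        (Υ = Smat d r s ∨ Υ = Amat d r s) →
        qinner d N (codeword d N α i)
          ((coll d N Γ * coll d N Υ) *ᵥ codeword d N α j) = 0) := by
  constructor
  · intro i j n hn
    unfold qinner
    apply Finset.sum_eq_zero
    intro f _
    simp only [Matrix.mulVec, dotProduct]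
    rw [Finset.mul_sum]
    apply Finset.sum_eq_zero
    intro g _
    by_cases h1 : codeword d N α i f = 0
    · simp [h1]
    by_cases h2 : codeword d N α j g = 0
    · simp [h2]
    by_cases h3 : coll d N (Smat d 0 n) f g = 0
    · simp [h3]
    exfalso
    rw [codeword_apply] at h1 h2
    have hD := coll_pair d N (Or.inl rfl : Smat d 0 n = Smat d 0 n ∨ _) h3
    have hle : ∑ ξ : ZMod d, |cont d N f ξ - cont d N g ξ| ≤ 4 := by
      have hb : ∀ ξ : ZMod d, |cont d N f ξ - cont d N g ξ|
          ≤ (if (0:ZMod d) = ξ then 1 else 0) + (if n = ξ then 1 else 0) := by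
        intro ξ
        rcases hD with hD | hD <;> rw [hD ξ]
        · exact abs_ite_sub_le d 0 n ξ
        · rw [abs_sub_comm]; exact abs_ite_sub_le d 0 n ξ
      calc ∑ ξ : ZMod d, |cont d N f ξ - cont d N g ξ|
          ≤ ∑ ξ : ZMod d, ((if (0:ZMod d) = ξ then 1 else 0) + (if n = ξ then 1 else 0)) :=
            Finset.sum_le_sum (fun ξ _ => hb ξ)
        _ = 2 := by rw [Finset.sum_add_distrib, sum_ite_one, sum_ite_one]; norm_num
        _ ≤ 4 := by norm_num
    have hfg := key d N hsp h1 h2 hle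
    rcases hD with hD | hD <;>
    · have h0 := hD 0
      rw [hfg, sub_self] at h0
      simp [hn] at h0
  · intro i j p q r s hpq hrs hset Γ Υ hΓ hΥ
    unfold qinner
    apply Finset.sum_eq_zero
    intro f _
    simp only [Matrix.mulVec, dotProduct]
    rw [Finset.mul_sum]
    apply Finset.sum_eq_zero
    intro g _
    by_cases h1 : codeword d N α i f = 0
    · simp [h1]
    by_cases h2 : codeword d N α j g = 0
    · simp [h2]
    by_cases h3 : (coll d N Γ * coll d N Υ) f g = 0
    · simp [h3]
    exfalso
    rw [codeword_apply] at h1 h2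
    rw [Matrix.mul_apply] at h3
    obtain ⟨h, -, hh⟩ := Finset.exists_ne_zero_of_sum_ne_zero h3
    obtain ⟨hA, hB⟩ := mul_ne_zero_iff.mp hh
    have hD1 := coll_pair d N hΓ hA
    have hD2 := coll_pair d N hΥ hB
    have hle : ∑ ξ : ZMod d, |cont d N f ξ - cont d N g ξ| ≤ 4 := by
      have hb : ∀ ξ : ZMod d, |cont d N f ξ - cont d N g ξ|
          ≤ ((if p = ξ then 1 else 0) + (if q = ξ then 1 else 0))
            + ((if r = ξ then 1 else 0) + (if s = ξ then 1 else 0)) := by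
        intro ξ
        have hs : cont d N f ξ - cont d N g ξ
            = (cont d N f ξ - cont d N h ξ) + (cont d N h ξ - cont d N g ξ) := by ring
        rw [hs]
        refine (abs_add_le _ _).trans (add_le_add ?_ ?_)
        · rcases hD1 with hD | hD <;> rw [hD ξ]
          · exact abs_ite_sub_le d p q ξ
          · rw [abs_sub_comm]; exact abs_ite_sub_le d p q ξ
        · rcases hD2 with hD | hD <;> rw [hD ξ]
          · exact abs_ite_sub_le d r s ξ
          · rw [abs_sub_comm]; exact abs_ite_sub_le d r s ξ
      calc ∑ ξ : ZMod d, |cont d N f ξ - cont d N g ξ|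
          ≤ ∑ ξ : ZMod d, (((if p = ξ then 1 else 0) + (if q = ξ then 1 else 0))
            + ((if r = ξ then 1 else 0) + (if s = ξ then 1 else 0))) :=
            Finset.sum_le_sum (fun ξ _ => hb ξ)
        _ = 4 := by
            rw [Finset.sum_add_distrib, Finset.sum_add_distrib, Finset.sum_add_distrib,
              sum_ite_one, sum_ite_one, sum_ite_one, sum_ite_one]
            norm_num
        _ ≤ 4 := le_refl _
    have hfg := key d N hsp h1 h2 hle
    have heq : ∀ ξ : ZMod d, cont d N f ξ - cont d N h ξ
        = -(cont d N h ξ - cont d N g ξ) := by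
      intro ξ
      have := congrFun hfg ξ
      omega
    rcases hD1 with hD1 | hD1 <;> rcases hD2 with hD2 | hD2
    · have hE : ∀ ξ : ZMod d, ((if p = ξ then (1:ℤ) else 0) - (if q = ξ then 1 else 0))
          = ((if s = ξ then 1 else 0) - (if r = ξ then 1 else 0)) := by
        intro ξ
        have := heq ξ
        rw [hD1 ξ, hD2 ξ] at this
        omega
      obtain ⟨e1, e2⟩ := ite_pair_inj d hpq hE
      exact hset (by rw [e1, e2, Set.pair_comm])
    · have hE : ∀ ξ : ZMod d, ((if p = ξ then (1:ℤ) else 0) - (if q = ξ then 1 else 0))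
          = ((if r = ξ then 1 else 0) - (if s = ξ then 1 else 0)) := by
        intro ξ
        have := heq ξ
        rw [hD1 ξ, hD2 ξ] at this
        omega
      obtain ⟨e1, e2⟩ := ite_pair_inj d hpq hE
      exact hset (by rw [e1, e2])
    · have hE : ∀ ξ : ZMod d, ((if q = ξ then (1:ℤ) else 0) - (if p = ξ then 1 else 0))
          = ((if s = ξ then 1 else 0) - (if r = ξ then 1 else 0)) := by
        intro ξ
        have := heq ξ
        rw [hD1 ξ, hD2 ξ] at this
        omega
      obtain ⟨e1, e2⟩ := ite_pair_inj d hpq.symm hE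
      exact hset (by rw [e1, e2])
    · have hE : ∀ ξ : ZMod d, ((if q = ξ then (1:ℤ) else 0) - (if p = ξ then 1 else 0))
          = ((if r = ξ then 1 else 0) - (if s = ξ then 1 else 0)) := by
        intro ξ
        have := heq ξ
        rw [hD1 ξ, hD2 ξ] at this
        omega
      obtain ⟨e1, e2⟩ := ite_pair_inj d hpq.symm hE
      exact hset (by rw [e1, e2, Set.pair_comm])
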